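/- arXiv:1204.0929 — 5 statements merged into one kernel-verified Lean document; each statement's English description precedes it below -/
import Mathlib

section
/- Let x, y ∈ ℝⁿ. If there exists a doubly stochastic n×n matrix A (nonnegative entries, each row and column summing to 1) with x = A y, then for every convex function f : ℝ → ℝ one has ∑ᵢ f(xᵢ) ≤ ∑ᵢ f(yᵢ). -/
theorem stmt_0 (n : ℕ) (x y : Fin n → ℝ) (A : Matrix (Fin n) (Fin n) ℝ)
    (hA : ∀ i j, 0 ≤ A i j)
    (hrow : ∀ i, ∑ j, A i j = 1)
    (hcol : ∀ j, ∑ i, A i j = 1)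
    (hx : ∀ i, x i = ∑ j, A i j * y j)
    (f : ℝ → ℝ) (hf : ConvexOn ℝ Set.univ f) :
    ∑ i, f (x i) ≤ ∑ i, f (y i) := by
  have h1 : ∀ i, f (x i) ≤ ∑ j, A i j * f (y j) := by
    intro i
    rw [hx i]
    calc f (∑ j, A i j • y j) ≤ ∑ j, A i j • f (y j) :=
          hf.map_sum_le (fun j _ => hA i j) (hrow i) (fun j _ => Set.mem_univ _)
      _ = ∑ j, A i j * f (y j) := rfl
  calc ∑ i, f (x i) ≤ ∑ i, ∑ j, A i j * f (y j) := Finset.sum_le_sum fun i _ => h1 i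
    _ = ∑ j, (∑ i, A i j) * f (y j) := by
        rw [Finset.sum_comm]; simp [Finset.sum_mul]
    _ = ∑ j, f (y j) := by simp [hcol]
end

section
/- Let x, y ∈ ℝⁿ with x majorized by y (i.e., for each k, the sum of the k largest entries of x is at most the sum of the k largest entries of y, with equality for k = n). Then ∑ᵢ f(xᵢ) ≤ ∑ᵢ f(yᵢ) for every continuous convex function f : ℝ → ℝ. -/
open Finset

lemma exists_subgradient (f : ℝ → ℝ) (hf : ConvexOn ℝ Set.univ f) :
    ∃ c : ℝ → ℝ, Monotone c ∧ ∀ t w : ℝ, f t + c t * (w - t) ≤ f w := by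
  have slope_le : ∀ a t b : ℝ, a < t → t < b →
      (f t - f a) / (t - a) ≤ (f b - f t) / (b - t) := fun a t b h1 h2 =>
    hf.slope_mono_adjacent (Set.mem_univ a) (Set.mem_univ b) h1 h2
  set S : ℝ → Set ℝ := fun t => (fun a => (f t - f a) / (t - a)) '' Set.Iio t with hS
  have hne : ∀ t, (S t).Nonempty := fun t => ⟨_, ⟨t - 1, by simp, rfl⟩⟩
  have hbdd : ∀ t, BddAbove (S t) := by
    intro t
    refine ⟨(f (t+1) - f t) / (t + 1 - t), ?_⟩
    rintro _ ⟨a, ha, rfl⟩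
    exact slope_le a t (t+1) ha (by linarith)
  refine ⟨fun t => sSup (S t), ?_, ?_⟩
  · intro t t' htt'
    rcases eq_or_lt_of_le htt' with rfl | h
    · exact le_rfl
    refine csSup_le (hne t) ?_
    rintro _ ⟨a, ha, rfl⟩
    have h1 : (f t - f a) / (t - a) ≤ (f t' - f t) / (t' - t) := slope_le a t t' ha h
    have h2 : (f t' - f t) / (t' - t) ∈ S t' := ⟨t, h, rfl⟩
    exact h1.trans (le_csSup (hbdd t') h2)
  · intro t w
    rcases lt_trichotomy w t with h | rfl | h
    · have hm : (f t - f w) / (t - w) ∈ S t := ⟨w, h, rfl⟩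
      have := le_csSup (hbdd t) hm
      rw [div_le_iff₀ (by linarith : (0:ℝ) < t - w)] at this
      nlinarith
    · simp
    · have hub : sSup (S t) ≤ (f w - f t) / (w - t) := by
        refine csSup_le (hne t) ?_
        rintro _ ⟨a, ha, rfl⟩
        exact slope_le a t w ha h
      rw [le_div_iff₀ (by linarith : (0:ℝ) < w - t)] at hub
      nlinarith

lemma abel_nonneg (n : ℕ) (W d : ℕ → ℝ)
    (hW : ∀ i j, i ≤ j → j < n → W i ≤ W j)
    (hH : ∀ k, k ≤ n → ∑ i ∈ range k, d i ≤ 0)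
    (h0 : ∑ i ∈ range n, d i = 0) :
    0 ≤ ∑ i ∈ range n, W i * d i := by
  rcases Nat.eq_zero_or_pos n with rfl | hn
  · simp
  have hbp := Finset.sum_range_by_parts W d n
  simp only [smul_eq_mul] at hbp
  rw [hbp, h0, mul_zero, zero_sub, neg_nonneg]
  apply Finset.sum_nonpos
  intro i hi
  simp only [mem_range] at hi
  have h1 : 0 ≤ W (i+1) - W i := sub_nonneg.2 (hW i (i+1) (by omega) (by omega))
  have h2 : ∑ j ∈ range (i+1), d j ≤ 0 := hH (i+1) (by omega)
  exact mul_nonpos_of_nonneg_of_nonpos h1 h2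

lemma fin_orderemb_le {n m : ℕ} (e : Fin m ↪o Fin n) (j : Fin m) :
    (e j : ℕ) ≤ n - m + j := by
  have hmap : ∀ a ∈ Finset.Ici j, e a ∈ Finset.Ici (e j) := by
    intro a ha; simp only [Finset.mem_Ici] at *; exact e.monotone ha
  have hcard := Finset.card_le_card_of_injOn e hmap (e.injective.injOn)
  rw [Fin.card_Ici, Fin.card_Ici] at hcard
  have := j.2
  have := (e j).2
  omega

lemma subset_sum_le (n : ℕ) (v : Fin n → ℝ) (hv : Monotone v) (T : Finset (Fin n)) :
    ∑ j ∈ T, v j ≤ ∑ j ∈ Finset.univ.filter (fun j : Fin n => n - T.card ≤ (j : ℕ)), v j := by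
  set m := T.card with hm
  have hmn : m ≤ n := by simpa using Finset.card_le_card (Finset.subset_univ T)
  set e := T.orderEmbOfFin hm.symm with he
  have hT : T = Finset.univ.map e.toEmbedding := by
    ext j
    simp only [Finset.mem_map, Finset.mem_univ, true_and, RelEmbedding.coe_toEmbedding]
    constructor
    · intro hj
      have h1 := T.range_orderEmbOfFin hm.symm
      rw [← he] at h1
      have : j ∈ Set.range e := by rw [h1]; exact hj
      exact this
    · rintro ⟨i, rfl⟩
      exact T.orderEmbOfFin_mem hm.symm i
  set g : Fin m ↪ Fin n := ⟨fun i => ⟨n - m + i, by omega⟩, by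
    intro a b hab
    simp only [Fin.mk.injEq] at hab
    exact Fin.ext (by omega)⟩ with hg
  have hgval : ∀ i : Fin m, ((g i : Fin n) : ℕ) = n - m + i := fun i => rfl
  have hS : Finset.univ.filter (fun j : Fin n => n - m ≤ (j : ℕ)) = Finset.univ.map g := by
    ext j
    simp only [Finset.mem_filter, Finset.mem_univ, true_and, Finset.mem_map]
    constructor
    · intro hj
      refine ⟨⟨(j : ℕ) - (n - m), by omega⟩, Fin.ext ?_⟩
      rw [hgval]
      simp
      omega
    · rintro ⟨i, rfl⟩
      rw [hgval]
      omega
  rw [hT, hS, Finset.sum_map, Finset.sum_map]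
  apply Finset.sum_le_sum
  intro i _
  apply hv
  have h1 := fin_orderemb_le e i
  rw [Fin.le_def, hgval]
  simpa using h1

lemma card_tail (n k : ℕ) (hk : k ≤ n) :
    (Finset.univ.filter (fun j : Fin n => k ≤ (j : ℕ))).card = n - k := by
  by_cases hkn : k = n
  · subst hkn
    have : (Finset.univ.filter (fun j : Fin k => k ≤ (j : ℕ))) = ∅ := by
      ext j
      simp only [Finset.mem_filter, Finset.mem_univ, true_and, Finset.notMem_empty,
        iff_false, not_le]
      exact j.2
    simp [this]
  have h : k < n := lt_of_le_of_ne hk hkn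
  · have : (Finset.univ.filter (fun j : Fin n => k ≤ (j : ℕ))) = Finset.Ici (⟨k, h⟩ : Fin n) := by
      ext j; simp [Fin.le_def]
    rw [this, Fin.card_Ici]

lemma sum_Ico_dite (n k : ℕ) (w : Fin n → ℝ) :
    ∑ i ∈ Finset.Ico k n, (if h : i < n then w ⟨i, h⟩ else 0)
      = ∑ j ∈ Finset.univ.filter (fun j : Fin n => k ≤ (j : ℕ)), w j := by
  refine Finset.sum_bij' (fun i hi => (⟨i, (Finset.mem_Ico.1 hi).2⟩ : Fin n))
    (fun j _ => (j : ℕ)) ?_ ?_ ?_ ?_ ?_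
  · intro a ha
    simp only [Finset.mem_filter, Finset.mem_univ, true_and]
    exact (Finset.mem_Ico.1 ha).1
  · intro a ha
    simp only [Finset.mem_filter, Finset.mem_univ, true_and] at ha
    exact Finset.mem_Ico.2 ⟨ha, a.2⟩
  · intro a ha; rfl
  · intro a ha; rfl
  · intro a ha
    rw [dif_pos (Finset.mem_Ico.1 ha).2]

/-- `x ≺ y` in `ℝⁿ`: for each `k`, the sum of the `k` largest entries of `x` is at most
the sum of the `k` largest entries of `y` (encoded: any `k`-subset sum of `x` is dominated
by some `k`-subset sum of `y`), with equality of the total sums. -/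
theorem stmt_1 (n : ℕ) (x y : Fin n → ℝ)
    (hmaj : ∀ s : Finset (Fin n), ∃ t : Finset (Fin n),
      t.card = s.card ∧ ∑ i ∈ s, x i ≤ ∑ i ∈ t, y i)
    (heq : ∑ i, x i = ∑ i, y i)
    (f : ℝ → ℝ) (hconv : ConvexOn ℝ Set.univ f) (hcont : Continuous f) :
    ∑ i, f (x i) ≤ ∑ i, f (y i) := by
  obtain ⟨c, hcmono, hcsub⟩ := exists_subgradient f hconv
  set σ := Tuple.sort x with hσ
  set τ := Tuple.sort y with hτ
  set u : Fin n → ℝ := x ∘ σ with hudef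
  set v : Fin n → ℝ := y ∘ τ with hvdef
  have hu : Monotone u := Tuple.monotone_sort x
  have hv : Monotone v := Tuple.monotone_sort y
  -- tail inequality on sorted sequences
  have tail : ∀ k, k ≤ n →
      ∑ j ∈ Finset.univ.filter (fun j : Fin n => k ≤ (j : ℕ)), u j
        ≤ ∑ j ∈ Finset.univ.filter (fun j : Fin n => k ≤ (j : ℕ)), v j := by
    intro k hk
    set s0 := Finset.univ.filter (fun j : Fin n => k ≤ (j : ℕ)) with hs0
    have hsum_u : ∑ j ∈ s0.image σ, x j = ∑ j ∈ s0, u j := by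
      rw [Finset.sum_image (fun a _ b _ h => σ.injective h)]
      rfl
    obtain ⟨t, htc, hle⟩ := hmaj (s0.image σ)
    have hcard_img : (s0.image σ).card = s0.card :=
      Finset.card_image_of_injective _ σ.injective
    set t' := t.image τ.symm with ht'
    have ht'c : t'.card = t.card := Finset.card_image_of_injective _ τ.symm.injective
    have hsum_t : ∑ j ∈ t', v j = ∑ j ∈ t, y j := by
      rw [Finset.sum_image (fun a _ b _ h => τ.symm.injective h)]
      apply Finset.sum_congr rfl
      intro a _
      simp [hvdef]
    have hA := subset_sum_le n v hv t'
    have hc2 : t'.card = n - k := by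
      rw [ht'c, htc, hcard_img, hs0, card_tail n k hk]
    rw [hc2] at hA
    have hnk : n - (n - k) = k := by omega
    rw [hnk] at hA
    calc ∑ j ∈ s0, u j = ∑ j ∈ s0.image σ, x j := hsum_u.symm
      _ ≤ ∑ j ∈ t, y j := hle
      _ = ∑ j ∈ t', v j := hsum_t.symm
      _ ≤ _ := hA
  -- move to ℕ-indexed world
  set A : ℕ → ℝ := fun i => if h : i < n then u ⟨i, h⟩ else 0 with hA
  set B : ℕ → ℝ := fun i => if h : i < n then v ⟨i, h⟩ else 0 with hB
  have hfilter0 : (Finset.univ.filter (fun j : Fin n => 0 ≤ (j : ℕ))) = Finset.univ := by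
    ext j; simp
  have hAtot : ∑ i ∈ range n, A i = ∑ i, x i := by
    rw [range_eq_Ico, hA, sum_Ico_dite n 0 u, hfilter0]
    exact Equiv.sum_comp σ x
  have hBtot : ∑ i ∈ range n, B i = ∑ i, y i := by
    rw [range_eq_Ico, hB, sum_Ico_dite n 0 v, hfilter0]
    exact Equiv.sum_comp τ y
  have htailAB : ∀ k, k ≤ n → ∑ i ∈ Finset.Ico k n, A i ≤ ∑ i ∈ Finset.Ico k n, B i := by
    intro k hk
    rw [hA, hB, sum_Ico_dite n k u, sum_Ico_dite n k v]
    exact tail k hk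
  set d : ℕ → ℝ := fun i => B i - A i with hd
  have h0 : ∑ i ∈ range n, d i = 0 := by
    rw [hd, Finset.sum_sub_distrib, hAtot, hBtot, heq, sub_self]
  have hH : ∀ k, k ≤ n → ∑ i ∈ range k, d i ≤ 0 := by
    intro k hk
    have e1 := Finset.sum_Ico_eq_sub A hk
    have e2 := Finset.sum_Ico_eq_sub B hk
    have e3 := htailAB k hk
    have : ∑ i ∈ range k, d i
        = ∑ i ∈ range k, B i - ∑ i ∈ range k, A i := by
      rw [hd, Finset.sum_sub_distrib]
    rw [this]
    have hT : ∑ i ∈ range n, A i = ∑ i ∈ range n, B i := by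
      rw [hAtot, hBtot, heq]
    linarith
  set W : ℕ → ℝ := fun i => c (A i) with hW
  have hWmono : ∀ i j, i ≤ j → j < n → W i ≤ W j := by
    intro i j hij hjn
    apply hcmono
    have hin : i < n := lt_of_le_of_lt hij hjn
    simp only [hA, dif_pos hin, dif_pos hjn]
    exact hu (by simpa [Fin.le_def] using hij)
  have habel := abel_nonneg n W d hWmono hH h0
  have hptwise : ∀ i ∈ range n, W i * d i ≤ f (B i) - f (A i) := by
    intro i _
    have := hcsub (A i) (B i)
    simp only [hW, hd]
    linarith
  have hsum : 0 ≤ ∑ i ∈ range n, (f (B i) - f (A i)) :=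
    le_trans habel (Finset.sum_le_sum hptwise)
  rw [Finset.sum_sub_distrib] at hsum
  have hfA : ∑ i ∈ range n, f (A i) = ∑ i, f (x i) := by
    have e1 : ∑ i ∈ range n, f (A i)
        = ∑ i ∈ Finset.Ico 0 n, (if h : i < n then (f ∘ u) ⟨i, h⟩ else 0) := by
      rw [range_eq_Ico]
      apply Finset.sum_congr rfl
      intro i hi
      have hin : i < n := (Finset.mem_Ico.1 hi).2
      simp only [hA, dif_pos hin, Function.comp_apply]
    rw [e1, sum_Ico_dite n 0 (f ∘ u), hfilter0]
    exact Equiv.sum_comp σ (fun j => f (x j))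
  have hfB : ∑ i ∈ range n, f (B i) = ∑ i, f (y i) := by
    have e1 : ∑ i ∈ range n, f (B i)
        = ∑ i ∈ Finset.Ico 0 n, (if h : i < n then (f ∘ v) ⟨i, h⟩ else 0) := by
      rw [range_eq_Ico]
      apply Finset.sum_congr rfl
      intro i hi
      have hin : i < n := (Finset.mem_Ico.1 hi).2
      simp only [hB, dif_pos hin, Function.comp_apply]
    rw [e1, sum_Ico_dite n 0 (f ∘ v), hfilter0]
    exact Equiv.sum_comp τ (fun j => f (y j))
  rw [hfA, hfB] at hsum
  linarith
end

section
/- Let H be a real Hilbert space, and suppose there is a doubly stochastic n×n matrix A with xᵢ = ∑_j a_{ij} y_j for all i. Then for every convex function f : Hⁿ → ℝ that is invariant under permutations of its n coordinates, f(x₁,…,x_n) ≤ f(y₁,…,y_n). -/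
theorem stmt_10 (H : Type*) [NormedAddCommGroup H] [InnerProductSpace ℝ H] [CompleteSpace H]
    (n : ℕ) (x y : Fin n → H) (A : Matrix (Fin n) (Fin n) ℝ)
    (hA : ∀ i j, 0 ≤ A i j) (hrow : ∀ i, ∑ j, A i j = 1) (hcol : ∀ j, ∑ i, A i j = 1)
    (hx : ∀ i, x i = ∑ j, A i j • y j)
    (f : (Fin n → H) → ℝ) (hconv : ConvexOn ℝ Set.univ f)
    (hsymm : ∀ (π : Equiv.Perm (Fin n)) (z : Fin n → H), f (z ∘ π) = f z) :
    f x ≤ f y := by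
  have hmem : A ∈ doublyStochastic ℝ (Fin n) := by
    rw [mem_doublyStochastic_iff_sum]
    exact ⟨fun i j => hA i j, hrow, hcol⟩
  obtain ⟨w, hw0, hw1, hwA⟩ := exists_eq_sum_perm_of_mem_doublyStochastic hmem
  have hAentry : ∀ i j, A i j = ∑ σ : Equiv.Perm (Fin n), w σ * (if σ i = j then 1 else 0) := by
    intro i j
    rw [← hwA]
    simp [Matrix.sum_apply, Equiv.Perm.permMatrix, PEquiv.toMatrix, Equiv.toPEquiv_apply,
      eq_comm]
  have hxs : x = ∑ σ : Equiv.Perm (Fin n), w σ • (y ∘ σ) := by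
    funext i
    rw [hx i]
    simp only [Finset.sum_apply, Pi.smul_apply, Function.comp_apply]
    calc ∑ j, A i j • y j
        = ∑ j, ∑ σ : Equiv.Perm (Fin n), (w σ * (if σ i = j then 1 else 0)) • y j := by
          exact Finset.sum_congr rfl fun j _ => by rw [hAentry, Finset.sum_smul]
      _ = ∑ σ : Equiv.Perm (Fin n), ∑ j, (w σ * (if σ i = j then 1 else 0)) • y j := by
          rw [Finset.sum_comm]
      _ = ∑ σ : Equiv.Perm (Fin n), w σ • y (σ i) := by
          apply Finset.sum_congr rfl
          intro σ _
          simp [mul_ite, ite_smul]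
  have hle : f x ≤ ∑ σ : Equiv.Perm (Fin n), w σ * f (y ∘ σ) := by
    rw [hxs]
    exact hconv.map_sum_le (fun σ _ => hw0 σ) (by simpa using hw1)
      (fun σ _ => Set.mem_univ _)
  calc f x ≤ ∑ σ : Equiv.Perm (Fin n), w σ * f (y ∘ σ) := hle
    _ = ∑ σ : Equiv.Perm (Fin n), w σ * f y := by simp_rw [hsymm]
    _ = f y := by rw [← Finset.sum_mul, hw1, one_mul]
end

section
/- Let H be a real Hilbert space and suppose there is a doubly stochastic n×n matrix A with xᵢ = ∑_j a_{ij} y_j for all i. Then for every α ≥ 1, ∑_{1 ≤ i < j ≤ n} ‖xᵢ − x_j‖^α ≤ ∑_{1 ≤ i < j ≤ n} ‖yᵢ − y_j‖^α. -/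
open Finset in
lemma double_sum_half {n : ℕ} (f : Fin n → Fin n → ℝ)
    (hs : ∀ i j, f i j = f j i) (hd : ∀ i, f i i = 0) :
    2 * ∑ i, ∑ j ∈ Finset.univ.filter (fun j => i < j), f i j = ∑ i, ∑ j, f i j := by
  have key : ∀ i j : Fin n, f i j =
      (if i < j then f i j else 0) + (if j < i then f i j else 0) + (if i = j then f i j else 0) := by
    intro i j
    rcases lt_trichotomy i j with h | h | h
    · simp [h, not_lt_of_gt h, ne_of_lt h]
    · simp [h]
    · simp [h, not_lt_of_gt h, (ne_of_lt h).symm]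
  have hS : ∑ i, ∑ j ∈ Finset.univ.filter (fun j => i < j), f i j
      = ∑ i, ∑ j, if i < j then f i j else 0 := by
    simp [Finset.sum_filter]
  have hS2 : (∑ i, ∑ j, if (j : Fin n) < i then f i j else 0)
      = ∑ i, ∑ j, if i < j then f i j else 0 := by
    rw [Finset.sum_comm]
    refine Finset.sum_congr rfl fun i _ => Finset.sum_congr rfl fun j _ => ?_
    rw [hs]
  have hdiag : (∑ i, ∑ j, if i = j then f i j else 0) = 0 := by
    refine Finset.sum_eq_zero fun i _ => ?_
    simp [Finset.sum_ite_eq, hd]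
  calc 2 * ∑ i, ∑ j ∈ Finset.univ.filter (fun j => i < j), f i j
      = (∑ i, ∑ j, if i < j then f i j else 0) + (∑ i, ∑ j, if (j : Fin n) < i then f i j else 0)
        + (∑ i, ∑ j, if i = j then f i j else 0) := by rw [hS, hS2, hdiag]; ring
    _ = ∑ i, ∑ j, f i j := by
        rw [← Finset.sum_add_distrib, ← Finset.sum_add_distrib]
        refine Finset.sum_congr rfl fun i _ => ?_
        rw [← Finset.sum_add_distrib, ← Finset.sum_add_distrib]
        exact Finset.sum_congr rfl fun j _ => (key i j).symm

theorem stmt_11 (H : Type*) [NormedAddCommGroup H] [InnerProductSpace ℝ H] [CompleteSpace H]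
    (n : ℕ) (x y : Fin n → H) (A : Matrix (Fin n) (Fin n) ℝ)
    (hA : ∀ i j, 0 ≤ A i j) (hrow : ∀ i, ∑ j, A i j = 1) (hcol : ∀ j, ∑ i, A i j = 1)
    (hx : ∀ i, x i = ∑ j, A i j • y j)
    (α : ℝ) (hα : 1 ≤ α) :
    ∑ i, ∑ j ∈ Finset.univ.filter (fun j => i < j), ‖x i - x j‖ ^ α
      ≤ ∑ i, ∑ j ∈ Finset.univ.filter (fun j => i < j), ‖y i - y j‖ ^ α := by
  have hα0 : α ≠ 0 := by linarith
  -- Step A: pointwise bound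
  have stepA : ∀ i j : Fin n, ‖x i - x j‖ ^ α ≤ ∑ k, ∑ l, A i k * A j l * ‖y k - y l‖ ^ α := by
    intro i j
    have hdecomp : x i - x j = ∑ k, ∑ l, (A i k * A j l) • (y k - y l) := by
      have h1 : (∑ k, ∑ l, (A i k * A j l) • y k) = x i := by
        rw [hx i]
        refine Finset.sum_congr rfl fun k _ => ?_
        rw [← Finset.sum_smul, ← Finset.mul_sum, hrow j, mul_one]
      have h2 : (∑ k, ∑ l, (A i k * A j l) • y l) = x j := by
        rw [Finset.sum_comm, hx j]
        refine Finset.sum_congr rfl fun l _ => ?_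
        rw [← Finset.sum_smul, ← Finset.sum_mul, hrow i, one_mul]
      simp only [smul_sub, Finset.sum_sub_distrib]
      rw [h1, h2]
    have hnorm : ‖x i - x j‖ ≤ ∑ k, ∑ l, A i k * A j l * ‖y k - y l‖ := by
      rw [hdecomp]
      refine (norm_sum_le _ _).trans (Finset.sum_le_sum fun k _ => ?_)
      refine (norm_sum_le _ _).trans (Finset.sum_le_sum fun l _ => ?_)
      rw [norm_smul, Real.norm_of_nonneg (mul_nonneg (hA i k) (hA j l))]
    have hw : ∀ p : Fin n × Fin n, 0 ≤ A i p.1 * A j p.2 :=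
      fun p => mul_nonneg (hA i p.1) (hA j p.2)
    have hw1 : ∑ p : Fin n × Fin n, A i p.1 * A j p.2 = 1 := by
      rw [Fintype.sum_prod_type]
      simp only [← Finset.mul_sum, hrow j, mul_one, hrow i]
    have jensen := Real.rpow_arith_mean_le_arith_mean_rpow Finset.univ
      (fun p : Fin n × Fin n => A i p.1 * A j p.2)
      (fun p : Fin n × Fin n => ‖y p.1 - y p.2‖)
      (fun p _ => hw p) hw1 (fun p _ => norm_nonneg _) hα
    calc ‖x i - x j‖ ^ α
        ≤ (∑ p : Fin n × Fin n, A i p.1 * A j p.2 * ‖y p.1 - y p.2‖) ^ α := by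
          refine Real.rpow_le_rpow (norm_nonneg _) ?_ (by linarith)
          rw [Fintype.sum_prod_type]
          exact hnorm
      _ ≤ ∑ p : Fin n × Fin n, A i p.1 * A j p.2 * ‖y p.1 - y p.2‖ ^ α := jensen
      _ = ∑ k, ∑ l, A i k * A j l * ‖y k - y l‖ ^ α := Fintype.sum_prod_type _
  -- Step B: full double sum comparison
  have stepB : ∑ i, ∑ j, ‖x i - x j‖ ^ α ≤ ∑ i, ∑ j, ‖y i - y j‖ ^ α := by
    calc ∑ i, ∑ j, ‖x i - x j‖ ^ α
        ≤ ∑ i, ∑ j, ∑ k, ∑ l, A i k * A j l * ‖y k - y l‖ ^ α :=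
          Finset.sum_le_sum fun i _ => Finset.sum_le_sum fun j _ => stepA i j
      _ = ∑ k, ∑ l, ‖y k - y l‖ ^ α := by
          have : ∀ i : Fin n, ∑ j, ∑ k, ∑ l, A i k * A j l * ‖y k - y l‖ ^ α
              = ∑ k, A i k * ∑ j, ∑ l, A j l * ‖y k - y l‖ ^ α := by
            intro i
            rw [Finset.sum_comm]
            refine Finset.sum_congr rfl fun k _ => ?_
            rw [Finset.mul_sum]
            refine Finset.sum_congr rfl fun j _ => ?_
            rw [Finset.mul_sum]
            refine Finset.sum_congr rfl fun l _ => ?_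
            ring
          simp only [this]
          rw [Finset.sum_comm]
          refine Finset.sum_congr rfl fun k _ => ?_
          rw [← Finset.sum_mul, hcol k, one_mul, Finset.sum_comm]
          refine Finset.sum_congr rfl fun l _ => ?_
          rw [← Finset.sum_mul, hcol l, one_mul]
  -- Step C: halving
  have hx_half := double_sum_half (fun i j => ‖x i - x j‖ ^ α)
    (fun i j => by rw [norm_sub_rev]) (fun i => by simp [Real.zero_rpow hα0])
  have hy_half := double_sum_half (fun i j => ‖y i - y j‖ ^ α)
    (fun i j => by rw [norm_sub_rev]) (fun i => by simp [Real.zero_rpow hα0])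
  nlinarith [hx_half, hy_half, stepB]
end

section
/- Let H be a real Hilbert space and suppose there is a doubly stochastic n×n matrix A with xᵢ = ∑_j a_{ij} y_j for all i. Then the point (x₁,…,x_n) ∈ Hⁿ lies in the convex hull of the n! points (y_{π(1)},…,y_{π(n)}), where π ranges over all permutations of {1,…,n}. -/
theorem stmt_12 (H : Type*) [NormedAddCommGroup H] [InnerProductSpace ℝ H] [CompleteSpace H]
    (n : ℕ) (x y : Fin n → H) (A : Matrix (Fin n) (Fin n) ℝ)
    (hA : ∀ i j, 0 ≤ A i j) (hrow : ∀ i, ∑ j, A i j = 1) (hcol : ∀ j, ∑ i, A i j = 1)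
    (hx : ∀ i, x i = ∑ j, A i j • y j) :
    x ∈ convexHull ℝ (Set.range fun π : Equiv.Perm (Fin n) => y ∘ π) := by
  have hmem : A ∈ doublyStochastic ℝ (Fin n) :=
    mem_doublyStochastic_iff_sum.2 ⟨hA, hrow, hcol⟩
  obtain ⟨w, hw0, hw1, hwA⟩ := exists_eq_sum_perm_of_mem_doublyStochastic hmem
  have hxeq : x = ∑ σ : Equiv.Perm (Fin n), w σ • (y ∘ σ) := by
    funext i
    rw [hx i]
    have hAij : ∀ j, A i j = ∑ σ : Equiv.Perm (Fin n),
        w σ * (if σ i = j then 1 else 0) := by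
      intro j
      rw [← hwA]
      simp [Matrix.sum_apply, Equiv.Perm.permMatrix, PEquiv.toMatrix_apply,
        Equiv.toPEquiv_apply]
    simp_rw [hAij, Finset.sum_smul]
    rw [Finset.sum_comm]
    simp [Finset.sum_apply, ite_smul, mul_smul, Finset.sum_ite_eq]
  rw [hxeq]
  exact (convex_convexHull ℝ _).sum_mem (fun σ _ => hw0 σ) hw1
    (fun σ _ => subset_convexHull ℝ _ (Set.mem_range_self σ))
end
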